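/- If every optimal ball contains at least one facility of a solution F, then F is a 2-approximation: cost(F) ≤ 2·OPT. -/
import Mathlib


open Finset

/-- The k-center cost of a facility set `F`: the maximum over clients of the
distance to the nearest facility (junk value 0 for empty `F`). -/
noncomputable def cost {C : Type*} [MetricSpace C] [Fintype C] [Nonempty C]
    (F : Finset C) : ℝ :=
  if h : F.Nonempty then
    Finset.univ.sup' Finset.univ_nonempty (fun c => F.inf' h (fun f => dist c f))
  else 0

/-- If every optimal ball contains at least one facility of `F`, then
`cost F ≤ 2 * OPT`. -/
theorem stmt0 {C : Type*} [MetricSpace C] [Fintype C] [Nonempty C] [DecidableEq C]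
    (k : ℕ) (hk : 1 ≤ k) (o : Fin k → C)
    (OPT : ℝ) (hOPT : cost (Finset.univ.image o) = OPT)
    (hcover : ∀ c : C, ∃ t : Fin k, dist (o t) c ≤ OPT)
    (F : Finset C) (hF : F.Nonempty)
    (hhit : ∀ t : Fin k, ∃ f ∈ F, dist (o t) f ≤ OPT) :
    cost F ≤ 2 * OPT := by
  rw [cost, dif_pos hF]
  apply Finset.sup'_le
  intro c _
  obtain ⟨t, ht⟩ := hcover c
  obtain ⟨f, hfF, hf⟩ := hhit t
  calc F.inf' hF (fun f => dist c f) ≤ dist c f := Finset.inf'_le _ hfF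
    _ ≤ dist c (o t) + dist (o t) f := dist_triangle _ _ _
    _ ≤ OPT + OPT := by rw [dist_comm]; exact add_le_add ht hf
    _ = 2 * OPT := by ring
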